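/- arXiv:1607.05610 — 4 statements merged into one kernel-verified Lean document; each statement's English description precedes it below -/
import Mathlib

section
/- Let (I_n)_{n∈ω} be the sequence of consecutive intervals of ω in which I_n has length n!, and for A ⊆ ω let φ_n(A) = |A ∩ I_n| / n!. Then the density ideal I = {A ⊆ ω : lim_{n→∞} φ_n(A) = 0} is an anti-homogeneous ideal (and it is an Erdős–Ulam ideal). -/
open Set Filter

/-- `I` is an ideal on the countable set `X`: closed under subsets and finite
unions, contains all finite sets, and does not contain the whole set. -/
def IsIdeal {X : Type*} (I : Set (Set X)) : Prop :=
  (∀ A B : Set X, A ∈ I → B ⊆ A → B ∈ I) ∧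
  (∀ A B : Set X, A ∈ I → B ∈ I → A ∪ B ∈ I) ∧
  (∀ A : Set X, A.Finite → A ∈ I) ∧
  (Set.univ : Set X) ∉ I

/-- The restriction `I|A = {B ∩ A : B ∈ I}`. -/
def restr {X : Type*} (I : Set (Set X)) (A : Set X) : Set (Set X) :=
  {C | ∃ B ∈ I, C = B ∩ A}

/-- `I|A ≅ I|B`: there is a bijection `f : B → A` such that for every
`C ⊆ A`, `C ∈ I|A ↔ f⁻¹[C] ∈ I|B`. -/
def RIso {X : Type*} (I : Set (Set X)) (A B : Set X) : Prop :=
  ∃ f : X → X, Set.BijOn f B A ∧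
    ∀ C : Set X, C ⊆ A → (C ∈ restr I A ↔ B ∩ f ⁻¹' C ∈ restr I B)

/-- The homogeneity family `H(I) = {A : I|A ≅ I}`. -/
def HF {X : Type*} (I : Set (Set X)) : Set (Set X) := {A | RIso I A Set.univ}

/-- `I` is homogeneous if `H(I) = I⁺`. -/
def HomogIdeal {X : Type*} (I : Set (Set X)) : Prop := HF I = {A | A ∉ I}

/-- `I` is anti-homogeneous if `H(I) = I*`. -/
def AntiHomogIdeal {X : Type*} (I : Set (Set X)) : Prop := HF I = {A | Aᶜ ∈ I}

/-- `I ≅ J`: a bijection `f` of underlying sets with `A ∈ I ↔ f⁻¹[A] ∈ J`. -/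
def Isomorphic {X Y : Type*} (I : Set (Set X)) (J : Set (Set Y)) : Prop :=
  ∃ f : Y → X, Function.Bijective f ∧ ∀ A : Set X, A ∈ I ↔ f ⁻¹' A ∈ J

/-- The ideal `Fin ⊕ P(ω)` on `{0,1} × ω` (here `Bool × ℕ`, `true` playing the
role of `1`): all sets `A` with `{n : (1,n) ∈ A}` finite. -/
def FinOplusAll : Set (Set (Bool × ℕ)) := {A | {n : ℕ | (true, n) ∈ A}.Finite}

/-- An ideal on `ω` is admissible if it is not isomorphic to `Fin ⊕ P(ω)`. -/
def Admissible (I : Set (Set ℕ)) : Prop := ¬ Isomorphic I FinOplusAll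

/-- An injection `f` is bi-`I`-invariant if `f[A] ∈ I ↔ A ∈ I` for all `A`. -/
def BiInvariant {X : Type*} (I : Set (Set X)) (f : X → X) : Prop :=
  Function.Injective f ∧ ∀ A : Set X, f '' A ∈ I ↔ A ∈ I

/-- The set of fixed points of `f`. -/
def fixedSet {X : Type*} (f : X → X) : Set X := {x | f x = x}

/-- `I` is a maximal ideal. -/
def MaximalIdeal {X : Type*} (I : Set (Set X)) : Prop :=
  IsIdeal I ∧ ∀ A : Set X, A ∈ I ∨ Aᶜ ∈ I

/-- Left endpoints of the consecutive intervals `I_n` with `|I_n| = n!`. -/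
def intStart (n : ℕ) : ℕ := ∑ k ∈ Finset.range n, Nat.factorial k

/-- `φ_n(A) = |A ∩ I_n| / n!`. -/
noncomputable def phi (n : ℕ) (A : Set ℕ) : ℝ :=
  ((A ∩ Set.Ico (intStart n) (intStart (n + 1))).ncard : ℝ) / (Nat.factorial n : ℝ)

/-- The density ideal `I = {A : φ_n(A) → 0}`. -/
def densIdeal : Set (Set ℕ) :=
  {A | Filter.Tendsto (fun n => phi n A) Filter.atTop (nhds 0)}

/-- The Erdős–Ulam ideal associated with `h`. -/
def EU (h : ℕ → ℝ) : Set (Set ℕ) :=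
  {A | Filter.Tendsto
    (fun n => (∑ k ∈ Finset.Icc 1 n, Set.indicator A h k) / (∑ k ∈ Finset.Icc 1 n, h k))
    Filter.atTop (nhds 0)}

open scoped Classical

lemma intStart_succ (n : ℕ) : intStart (n + 1) = intStart n + n.factorial :=
  Finset.sum_range_succ _ n

lemma intStart_strictMono : StrictMono intStart := by
  apply strictMono_nat_of_lt_succ
  intro n
  rw [intStart_succ]
  have := n.factorial_pos
  omega

lemma self_le_intStart (n : ℕ) : n ≤ intStart n := by
  induction n with
  | zero => simp [intStart]
  | succ n ih => rw [intStart_succ]; have := n.factorial_pos; omega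

lemma intStart_le_factorial (n : ℕ) : intStart n ≤ n.factorial := by
  induction n with
  | zero => simp [intStart]
  | succ n ih =>
    rw [intStart_succ, Nat.factorial_succ]
    rcases Nat.eq_zero_or_pos n with h | h
    · subst h; simp [intStart]
    · have h2 : intStart n ≤ n * n.factorial := ih.trans (Nat.le_mul_of_pos_left _ h)
      have h3 : (n + 1) * n.factorial = n * n.factorial + n.factorial := by ring
      omega

noncomputable def cnt (A : Set ℕ) (s : Finset ℕ) : ℕ := (s.filter (· ∈ A)).card

noncomputable def cntIn (A : Set ℕ) (n : ℕ) : ℕ :=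
  cnt A (Finset.Ico (intStart n) (intStart (n + 1)))

lemma coe_filter_mem (A : Set ℕ) (s : Finset ℕ) : ((s.filter (· ∈ A) : Finset ℕ) : Set ℕ) = A ∩ s := by
  ext x; simp [and_comm]

lemma ncard_eq_cnt (A : Set ℕ) (a b : ℕ) :
    (A ∩ Set.Ico a b).ncard = cnt A (Finset.Ico a b) := by
  rw [cnt, ← Set.ncard_coe_finset, coe_filter_mem, Finset.coe_Ico]

lemma phi_eq (n : ℕ) (A : Set ℕ) : phi n A = (cntIn A n : ℝ) / (n.factorial : ℝ) := by
  rw [phi, cntIn, ncard_eq_cnt]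

lemma cnt_le_card (A : Set ℕ) (s : Finset ℕ) : cnt A s ≤ s.card :=
  Finset.card_le_card (Finset.filter_subset _ _)

lemma card_Ico_intStart (n : ℕ) :
    (Finset.Ico (intStart n) (intStart (n + 1))).card = n.factorial := by
  rw [Nat.card_Ico, intStart_succ]; omega

lemma cntIn_le (A : Set ℕ) (n : ℕ) : cntIn A n ≤ n.factorial := by
  have := cnt_le_card A (Finset.Ico (intStart n) (intStart (n + 1)))
  rwa [card_Ico_intStart] at this

lemma cnt_mono {A B : Set ℕ} (h : A ⊆ B) (s : Finset ℕ) : cnt A s ≤ cnt B s := by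
  refine Finset.card_le_card (fun x hx => ?_)
  simp only [Finset.mem_filter] at hx ⊢
  exact ⟨hx.1, h hx.2⟩

lemma cnt_union_le (A B : Set ℕ) (s : Finset ℕ) : cnt (A ∪ B) s ≤ cnt A s + cnt B s := by
  rw [cnt, cnt, cnt]
  refine le_trans (Finset.card_le_card ?_) (Finset.card_union_le _ _)
  intro x; simp [Finset.mem_filter, Finset.mem_union]; tauto

lemma cnt_add_cnt_compl (A : Set ℕ) (s : Finset ℕ) : cnt A s + cnt Aᶜ s = s.card := by
  have := Finset.card_filter_add_card_filter_not (s := s) (p := (· ∈ A))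
  simpa [cnt] using this

lemma factorial_cast_pos (n : ℕ) : (0 : ℝ) < (n.factorial : ℝ) := by
  exact_mod_cast n.factorial_pos

lemma mem_densIdeal_iff {A : Set ℕ} :
    A ∈ densIdeal ↔ ∀ ε : ℝ, 0 < ε → ∀ᶠ n in atTop, (cntIn A n : ℝ) < ε * (n.factorial : ℝ) := by
  constructor
  · intro h ε hε
    have := (Metric.tendsto_atTop.1 h) ε hε
    obtain ⟨N, hN⟩ := this
    refine eventually_atTop.2 ⟨N, fun n hn => ?_⟩
    have h2 := hN n hn
    rw [Real.dist_eq, sub_zero, phi_eq, abs_of_nonneg (by positivity)] at h2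
    rwa [div_lt_iff₀ (factorial_cast_pos n)] at h2
  · intro h
    rw [densIdeal, Set.mem_setOf_eq, Metric.tendsto_atTop]
    intro ε hε
    obtain ⟨N, hN⟩ := eventually_atTop.1 (h ε hε)
    refine ⟨N, fun n hn => ?_⟩
    rw [Real.dist_eq, sub_zero, phi_eq, abs_of_nonneg (by positivity)]
    rw [div_lt_iff₀ (factorial_cast_pos n)]
    exact hN n hn

lemma densIdeal_subset {A B : Set ℕ} (hA : A ∈ densIdeal) (h : B ⊆ A) : B ∈ densIdeal := by
  rw [mem_densIdeal_iff] at hA ⊢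
  intro ε hε
  filter_upwards [hA ε hε] with n hn
  exact lt_of_le_of_lt (Nat.cast_le.2 (cnt_mono h _)) hn

lemma densIdeal_union {A B : Set ℕ} (hA : A ∈ densIdeal) (hB : B ∈ densIdeal) :
    A ∪ B ∈ densIdeal := by
  rw [mem_densIdeal_iff] at hA hB ⊢
  intro ε hε
  filter_upwards [hA (ε / 2) (by linarith), hB (ε / 2) (by linarith)] with n h1 h2
  have h3 : (cntIn (A ∪ B) n : ℝ) ≤ (cntIn A n : ℝ) + (cntIn B n : ℝ) := by
    exact_mod_cast cnt_union_le A B _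
  linarith

lemma densIdeal_finite {A : Set ℕ} (hA : A.Finite) : A ∈ densIdeal := by
  rw [mem_densIdeal_iff]
  intro ε hε
  obtain ⟨m, hm⟩ := hA.bddAbove
  rw [mem_upperBounds] at hm
  refine eventually_atTop.2 ⟨m + 1, fun n hn => ?_⟩
  have h0 : cntIn A n = 0 := by
    rw [cntIn, cnt, Finset.card_eq_zero, Finset.filter_eq_empty_iff]
    intro x hx hxA
    have := hm x hxA
    have h1 := self_le_intStart n
    simp only [Finset.mem_Ico] at hx
    omega
  rw [h0]
  push_cast
  positivity

lemma univ_not_mem_densIdeal : (Set.univ : Set ℕ) ∉ densIdeal := by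
  rw [mem_densIdeal_iff]
  push_neg
  refine ⟨1/2, by norm_num, ?_⟩
  refine Filter.Frequently.of_forall (fun n => ?_)
  have : cntIn Set.univ n = n.factorial := by
    rw [cntIn, cnt]
    simp [card_Ico_intStart n]
  rw [this]
  nlinarith [factorial_cast_pos n]

lemma isIdeal_densIdeal : IsIdeal densIdeal :=
  ⟨fun _ _ hA h => densIdeal_subset hA h, fun _ _ => densIdeal_union,
   fun _ => densIdeal_finite, univ_not_mem_densIdeal⟩

lemma mem_restr_univ {X : Type*} {I : Set (Set X)} {C : Set X} :
    C ∈ restr I univ ↔ C ∈ I := by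
  simp only [restr, Set.mem_setOf_eq, Set.inter_univ]
  constructor
  · rintro ⟨B, hB, rfl⟩; exact hB
  · intro h; exact ⟨C, h, rfl⟩

lemma mem_restr_densIdeal {A C : Set ℕ} (hCA : C ⊆ A) :
    C ∈ restr densIdeal A ↔ C ∈ densIdeal := by
  constructor
  · rintro ⟨B, hB, rfl⟩; exact densIdeal_subset hB Set.inter_subset_left
  · intro h; exact ⟨C, h, (Set.inter_eq_self_of_subset_left hCA).symm⟩

/-- cumulative count of `A` below `x`. -/
noncomputable def cum (A : Set ℕ) (x : ℕ) : ℕ := cnt A (Finset.range x)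

lemma cum_succ_block (A : Set ℕ) (n : ℕ) :
    cum A (intStart (n + 1)) = cum A (intStart n) + cntIn A n := by
  rw [cum, cum, cntIn, cnt, cnt, cnt]
  rw [Finset.range_eq_Ico,
    ← Finset.Ico_union_Ico_eq_Ico (Nat.zero_le _) (intStart_strictMono (Nat.lt_succ_self n)).le,
    Finset.filter_union]
  rw [Finset.card_union_of_disjoint]
  · rw [Finset.range_eq_Ico]
  exact Finset.disjoint_filter_filter (p := (· ∈ A)) (q := (· ∈ A)) (Finset.Ico_disjoint_Ico_consecutive (0:ℕ) (intStart n) (intStart (n + 1)))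

lemma cum_le (A : Set ℕ) (x : ℕ) : cum A x ≤ x := by
  have := cnt_le_card A (Finset.range x)
  rwa [Finset.card_range] at this

lemma cum_add_cum_compl (A : Set ℕ) (x : ℕ) : cum A x + cum Aᶜ x = x := by
  have := cnt_add_cnt_compl A (Finset.range x)
  rwa [Finset.card_range] at this

/-- factorial tends to infinity (as reals). -/
lemma tendsto_factorial_atTop : Tendsto (fun n : ℕ => (n.factorial : ℝ)) atTop atTop := by
  apply tendsto_natCast_atTop_atTop.comp
  have : Tendsto (fun n : ℕ => n) atTop atTop := tendsto_id
  exact tendsto_atTop_mono (fun n : ℕ => Nat.self_le_factorial n) this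

/-- (F1): if `Aᶜ ∈ densIdeal` then the cumulative complement count is small. -/
lemma cum_compl_small {A : Set ℕ} (hA : Aᶜ ∈ densIdeal) {ε : ℝ} (hε : 0 < ε) :
    ∀ᶠ n in atTop, (cum Aᶜ (intStart (n + 1)) : ℝ) < ε * (n.factorial : ℝ) := by
  rw [mem_densIdeal_iff] at hA
  obtain ⟨N, hN⟩ := eventually_atTop.1 (hA (ε / 4) (by linarith))
  -- claim: for n ≥ N, cum Aᶜ (intStart (n+1)) ≤ cum Aᶜ (intStart N) + (ε/4) * intStart (n+1)
  have key : ∀ n, N ≤ n →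
      (cum Aᶜ (intStart (n + 1)) : ℝ) ≤ (cum Aᶜ (intStart N) : ℝ) + ε / 4 * (intStart (n + 1) : ℝ) := by
    intro n hn
    induction n, hn using Nat.le_induction with
    | base =>
      rw [cum_succ_block]
      push_cast
      have h1 := hN N le_rfl
      have h2 : (N.factorial : ℝ) ≤ (intStart (N + 1) : ℝ) := by
        have : N.factorial ≤ intStart (N + 1) := by rw [intStart_succ]; omega
        exact_mod_cast this
      nlinarith
    | succ n hn ih =>
      rw [cum_succ_block]
      push_cast
      have h1 := hN (n + 1) (by omega)
      have h2 : ((n+1).factorial : ℝ) + (intStart (n+1) : ℝ) ≤ (intStart (n + 2) : ℝ) := by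
        have : (n+1).factorial + intStart (n+1) ≤ intStart (n + 2) := by
          rw [intStart_succ (n+1)]; omega
        exact_mod_cast this
      push_cast at ih h1 h2 ⊢
      nlinarith
  -- intStart (n+1) ≤ 2 * n!
  have h2int : ∀ n : ℕ, (intStart (n + 1) : ℝ) ≤ 2 * (n.factorial : ℝ) := by
    intro n
    have : intStart (n + 1) ≤ 2 * n.factorial := by
      have := intStart_le_factorial n; rw [intStart_succ]; omega
    exact_mod_cast this
  have hC : Tendsto (fun n : ℕ => ε / 4 * (n.factorial : ℝ)) atTop atTop :=
    Filter.Tendsto.const_mul_atTop (by linarith) tendsto_factorial_atTop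
  filter_upwards [eventually_ge_atTop N, hC.eventually_gt_atTop ((cum Aᶜ (intStart N) : ℝ))]
    with n hn hbig
  calc (cum Aᶜ (intStart (n + 1)) : ℝ)
      ≤ (cum Aᶜ (intStart N) : ℝ) + ε / 4 * (intStart (n + 1) : ℝ) := key n hn
    _ < ε / 4 * (n.factorial : ℝ) + ε / 4 * (2 * (n.factorial : ℝ)) := by
        have := h2int n
        nlinarith
    _ ≤ ε * (n.factorial : ℝ) := by nlinarith [factorial_cast_pos n]

/-! ### The enumeration of an infinite set -/

noncomputable def enum (A : Set ℕ) : ℕ → ℕ := Nat.nth (· ∈ A)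

lemma cntIn_def (X : Set ℕ) (n : ℕ) :
    cntIn X n = ((Finset.Ico (intStart n) (intStart (n + 1))).filter (· ∈ X)).card := rfl

section Enum

variable {A : Set ℕ}

lemma setOf_mem_infinite (hA : A.Infinite) : (setOf (· ∈ A)).Infinite := by
  exact hA

lemma enum_strictMono (hA : A.Infinite) : StrictMono (enum A) :=
  Nat.nth_strictMono (setOf_mem_infinite hA)

lemma enum_mem (hA : A.Infinite) (k : ℕ) : enum A k ∈ A :=
  Nat.nth_mem_of_infinite (setOf_mem_infinite hA) k

lemma range_enum (hA : A.Infinite) : Set.range (enum A) = A :=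
  Nat.range_nth_of_infinite (setOf_mem_infinite hA)

lemma enum_ge (hA : A.Infinite) (k : ℕ) : k ≤ enum A k :=
  (enum_strictMono hA).le_apply

lemma enum_lt_of_cnt (hA : A.Infinite) {k x : ℕ} (h : k < cum A x) : enum A k < x := by
  by_contra h2
  push_neg at h2
  have hsub : (Finset.range x).filter (· ∈ A) ⊆ (Finset.range k).image (enum A) := by
    intro a ha
    simp only [Finset.mem_filter, Finset.mem_range] at ha
    obtain ⟨ha1, ha2⟩ := ha
    obtain ⟨j, rfl⟩ : ∃ j, enum A j = a := by
      have : a ∈ Set.range (enum A) := by rw [range_enum hA]; exact ha2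
      exact this
    have hj : j < k := by
      by_contra hj
      push_neg at hj
      have := ((enum_strictMono hA).le_iff_le).2 hj
      omega
    simp only [Finset.mem_image, Finset.mem_range]
    exact ⟨j, hj, rfl⟩
  have := (Finset.card_le_card hsub).trans (Finset.card_image_le)
  rw [Finset.card_range] at this
  rw [cum, cnt] at h
  omega

lemma enum_lt_boundary (hA : A.Infinite) {n : ℕ}
    (hyp : cum Aᶜ (intStart (n + 2)) ≤ (n + 1).factorial) :
    ∀ k < intStart (n + 1), enum A k < intStart (n + 2) := by
  intro k hk
  apply enum_lt_of_cnt hA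
  have h1 := cum_add_cum_compl A (intStart (n + 2))
  have h2 : intStart (n + 2) = intStart (n + 1) + (n + 1).factorial := intStart_succ (n + 1)
  omega

lemma card_filter_enum_ge (hA : A.Infinite) (n : ℕ) (p : ℕ → Prop) :
    ((Finset.Ico (intStart n) (intStart (n + 1))).filter
      (fun k => p k ∧ intStart (n + 1) ≤ enum A k)).card ≤ cum Aᶜ (intStart (n + 1)) := by
  have hsub : ((Finset.Ico (intStart n) (intStart (n + 1))).filter
      (fun k => p k ∧ intStart (n + 1) ≤ enum A k)) ⊆
      Finset.Ico (cum A (intStart (n + 1))) (intStart (n + 1)) := by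
    intro k hk
    simp only [Finset.mem_filter, Finset.mem_Ico] at hk ⊢
    refine ⟨?_, hk.1.2⟩
    by_contra h2
    push_neg at h2
    have := enum_lt_of_cnt hA h2
    omega
  have := Finset.card_le_card hsub
  rw [Nat.card_Ico] at this
  have h1 := cum_add_cum_compl A (intStart (n + 1))
  omega

lemma cntIn_preim_le (hA : A.Infinite) (C : Set ℕ) (n : ℕ) :
    cntIn (enum A ⁻¹' C) n ≤ cntIn C n + cum Aᶜ (intStart (n + 1)) := by
  have hsplit : (Finset.Ico (intStart n) (intStart (n + 1))).filter (· ∈ enum A ⁻¹' C) ⊆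
      ((Finset.Ico (intStart n) (intStart (n + 1))).filter
        (fun k => k ∈ enum A ⁻¹' C ∧ enum A k < intStart (n + 1))) ∪
      ((Finset.Ico (intStart n) (intStart (n + 1))).filter
        (fun k => k ∈ enum A ⁻¹' C ∧ intStart (n + 1) ≤ enum A k)) := by
    intro k hk
    simp only [Finset.mem_filter, Finset.mem_union] at hk ⊢
    rcases lt_or_ge (enum A k) (intStart (n + 1)) with h | h
    · exact Or.inl ⟨hk.1, hk.2, h⟩
    · exact Or.inr ⟨hk.1, hk.2, h⟩
  have h1 : ((Finset.Ico (intStart n) (intStart (n + 1))).filter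
      (fun k => k ∈ enum A ⁻¹' C ∧ enum A k < intStart (n + 1))).card ≤ cntIn C n := by
    rw [cntIn_def]
    apply Finset.card_le_card_of_injOn (enum A)
    · intro a ha
      simp only [Finset.coe_filter, Finset.mem_coe, Finset.mem_filter, Finset.mem_Ico, Set.mem_preimage, Set.mem_setOf_eq] at ha ⊢
      have := enum_ge hA a
      exact ⟨⟨by omega, ha.2.2⟩, ha.2.1⟩
    · exact ((enum_strictMono hA).injective).injOn
  have h2 := card_filter_enum_ge hA n (fun k => k ∈ enum A ⁻¹' C)
  have h3 := (Finset.card_le_card hsplit).trans (Finset.card_union_le _ _)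
  rw [cntIn_def]
  omega

lemma cntIn_le_preim (hA : A.Infinite) (C : Set ℕ) (hCA : C ⊆ A) {n N₁ : ℕ} (hn : N₁ ≤ n)
    (hG : ∀ m, N₁ ≤ m → ∀ k < intStart (m + 1), enum A k < intStart (m + 2)) :
    cntIn C (n + 2) ≤ cntIn (enum A ⁻¹' C) (n + 1) + cntIn (enum A ⁻¹' C) (n + 2) := by
  have hsub : (Finset.Ico (intStart (n + 2)) (intStart (n + 3))).filter (· ∈ C) ⊆
      ((Finset.Ico (intStart (n + 1)) (intStart (n + 3))).filter
        (· ∈ enum A ⁻¹' C)).image (enum A) := by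
    intro c hc
    simp only [Finset.mem_filter, Finset.mem_Ico] at hc
    obtain ⟨k, rfl⟩ : ∃ k, enum A k = c := by
      have : c ∈ Set.range (enum A) := by rw [range_enum hA]; exact hCA hc.2
      exact this
    simp only [Finset.mem_image, Finset.mem_filter, Finset.mem_Ico, Set.mem_preimage]
    refine ⟨k, ⟨⟨?_, ?_⟩, hc.2⟩, rfl⟩
    · by_contra h2
      push_neg at h2
      have := hG n hn k h2
      omega
    · have := enum_ge hA k
      omega
  have hcard := (Finset.card_le_card hsub).trans Finset.card_image_le
  have hbigssplit : Finset.Ico (intStart (n + 1)) (intStart (n + 3)) =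
      Finset.Ico (intStart (n + 1)) (intStart (n + 2)) ∪
      Finset.Ico (intStart (n + 2)) (intStart (n + 3)) := by
    rw [Finset.Ico_union_Ico_eq_Ico]
    · exact (intStart_strictMono (by omega)).le
    · exact (intStart_strictMono (by omega)).le
  rw [hbigssplit, Finset.filter_union] at hcard
  have h4 := Finset.card_union_le
    ((Finset.Ico (intStart (n + 1)) (intStart (n + 2))).filter (· ∈ enum A ⁻¹' C))
    ((Finset.Ico (intStart (n + 2)) (intStart (n + 3))).filter (· ∈ enum A ⁻¹' C))
  simp only [cntIn_def, show n + 1 + 1 = n + 2 from rfl, show n + 2 + 1 = n + 3 from rfl]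
  omega

end Enum

lemma infinite_of_compl_densIdeal {A : Set ℕ} (hA : Aᶜ ∈ densIdeal) : A.Infinite := by
  intro hfin
  have h1 : A ∈ densIdeal := densIdeal_finite hfin
  have h2 : (Set.univ : Set ℕ) ∈ densIdeal := by
    have := densIdeal_union h1 hA
    rwa [Set.union_compl_self] at this
  exact univ_not_mem_densIdeal h2

lemma enum_iso {A : Set ℕ} (hA' : Aᶜ ∈ densIdeal) (C : Set ℕ) (hCA : C ⊆ A) :
    C ∈ densIdeal ↔ enum A ⁻¹' C ∈ densIdeal := by
  have hA : A.Infinite := infinite_of_compl_densIdeal hA'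
  constructor
  · intro hC
    rw [mem_densIdeal_iff] at hC ⊢
    intro ε hε
    filter_upwards [hC (ε / 2) (by linarith), cum_compl_small hA' (show (0:ℝ) < ε / 2 by linarith)]
      with n h1 h2
    have h3 : (cntIn (enum A ⁻¹' C) n : ℝ) ≤ (cntIn C n : ℝ) + (cum Aᶜ (intStart (n + 1)) : ℝ) := by
      exact_mod_cast cntIn_preim_le hA C n
    linarith
  · intro hC
    rw [mem_densIdeal_iff] at hC ⊢
    intro ε hε
    -- get the boundary control
    obtain ⟨M₀, hM₀⟩ := eventually_atTop.1 (cum_compl_small hA' (show (0:ℝ) < 1 by norm_num))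
    have hG : ∀ m, M₀ ≤ m → ∀ k < intStart (m + 1), enum A k < intStart (m + 2) := by
      intro m hm
      apply enum_lt_boundary hA
      have := hM₀ (m + 1) (by omega)
      have h2 : (cum Aᶜ (intStart (m + 2)) : ℝ) < ((m + 1).factorial : ℝ) := by
        rw [one_mul] at this; exact this
      exact_mod_cast h2.le
    obtain ⟨M₁, hM₁⟩ := eventually_atTop.1 (hC (ε / 2) (by linarith))
    refine eventually_atTop.2 ⟨M₀ + M₁ + 2, fun n hn => ?_⟩
    obtain ⟨j, rfl⟩ : ∃ j, n = j + 2 := ⟨n - 2, by omega⟩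
    have hkey := cntIn_le_preim hA C hCA (show M₀ ≤ j by omega) hG
    have e1 := hM₁ (j + 1) (by omega)
    have e2 := hM₁ (j + 2) (by omega)
    have hfle : ((j + 1).factorial : ℝ) ≤ ((j + 2).factorial : ℝ) := by
      exact_mod_cast Nat.factorial_le (by omega)
    have hc : (cntIn C (j + 2) : ℝ) ≤ (cntIn (enum A ⁻¹' C) (j + 1) : ℝ) +
        (cntIn (enum A ⁻¹' C) (j + 2) : ℝ) := by exact_mod_cast hkey
    nlinarith

lemma riso_of_compl {A : Set ℕ} (hA' : Aᶜ ∈ densIdeal) : RIso densIdeal A Set.univ := by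
  have hA : A.Infinite := infinite_of_compl_densIdeal hA'
  refine ⟨enum A, ⟨fun k _ => enum_mem hA k, ((enum_strictMono hA).injective).injOn, ?_⟩, ?_⟩
  · intro a ha
    have : a ∈ Set.range (enum A) := by rw [range_enum hA]; exact ha
    obtain ⟨k, hk⟩ := this
    exact ⟨k, Set.mem_univ k, hk⟩
  · intro C hCA
    rw [mem_restr_densIdeal hCA, Set.univ_inter, mem_restr_univ]
    exact enum_iso hA' C hCA

lemma intStart_small {ε : ℝ} (hε : 0 < ε) :
    ∀ᶠ n in atTop, (intStart n : ℝ) < ε * (n.factorial : ℝ) := by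
  have hmul : ∀ n : ℕ, 1 ≤ n → (n : ℝ) * (intStart n : ℝ) ≤ 2 * (n.factorial : ℝ) := by
    intro n hn
    have h1 : intStart n ≤ 2 * (n - 1).factorial := by
      have h2 : intStart n = intStart (n - 1) + (n - 1).factorial := by
        have h0 : n - 1 + 1 = n := by omega
        conv_lhs => rw [← h0, intStart_succ]
      have := intStart_le_factorial (n - 1)
      omega
    have h3 : n * intStart n ≤ 2 * n.factorial := by
      calc n * intStart n ≤ n * (2 * (n - 1).factorial) := Nat.mul_le_mul_left n h1
        _ = 2 * (n * (n - 1).factorial) := by ring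
        _ = 2 * n.factorial := by
            congr 1
            rw [← Nat.succ_pred_eq_of_pos (by omega : 0 < n), Nat.factorial_succ]
            simp
    exact_mod_cast h3
  have hcast : Tendsto (fun n : ℕ => (n : ℝ)) atTop atTop := tendsto_natCast_atTop_atTop
  filter_upwards [hcast.eventually_gt_atTop (2 / ε), eventually_ge_atTop 1] with n h1 h2
  have hmn := hmul n h2
  have hnpos : (0 : ℝ) < n := by exact_mod_cast h2
  have hfpos := factorial_cast_pos n
  have h4 : 2 < ε * n := by
    rw [div_lt_iff₀ hε] at h1; linarith
  have h5 : 2 * (n.factorial : ℝ) < ε * n * n.factorial := by nlinarith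
  have h6 : (n : ℝ) * (intStart n : ℝ) < (n : ℝ) * (ε * n.factorial) := by nlinarith
  exact lt_of_mul_lt_mul_left h6 hnpos.le

lemma compl_mem_of_riso {A : Set ℕ} (h : RIso densIdeal A Set.univ) : Aᶜ ∈ densIdeal := by
  obtain ⟨f, hbij, hprop⟩ := h
  set D : Set ℕ := {k | ∃ m, k < intStart m ∧ intStart m ≤ f k} with hD
  have hCA : f '' D ⊆ A := by
    rintro c ⟨k, _, rfl⟩
    exact hbij.mapsTo (Set.mem_univ k)
  have hCsmall : ∀ m, cntIn (f '' D) m ≤ intStart m := by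
    intro m
    rw [cntIn_def]
    have hsub : (Finset.Ico (intStart m) (intStart (m + 1))).filter (· ∈ f '' D) ⊆
        (Finset.range (intStart m)).image f := by
      intro c hc
      simp only [Finset.mem_filter, Finset.mem_Ico] at hc
      obtain ⟨⟨hc1, hc2⟩, k, hkD, rfl⟩ := hc
      obtain ⟨i, hki, hif⟩ := hkD
      have hi : i < m + 1 := by
        have : intStart i < intStart (m + 1) := by omega
        exact intStart_strictMono.lt_iff_lt.1 this
      have : intStart i ≤ intStart m := by
        rcases Nat.lt_or_ge i m with h | h
        · exact (intStart_strictMono h).le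
        · have : i = m := by omega
          rw [this]
      simp only [Finset.mem_image, Finset.mem_range]
      exact ⟨k, by omega, rfl⟩
    exact le_trans (Finset.card_le_card hsub)
      (le_trans Finset.card_image_le (by rw [Finset.card_range]))
  have hC : f '' D ∈ densIdeal := by
    rw [mem_densIdeal_iff]
    intro ε hε
    filter_upwards [intStart_small hε] with n h1
    exact lt_of_le_of_lt (by exact_mod_cast hCsmall n) h1
  have hpre : f ⁻¹' (f '' D) ∈ densIdeal := by
    have := (hprop (f '' D) hCA).1 ((mem_restr_densIdeal hCA).2 hC)
    rwa [Set.univ_inter, mem_restr_univ] at this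
  have hDmem : D ∈ densIdeal := densIdeal_subset hpre (Set.subset_preimage_image f D)
  have hmain : ∀ n, cntIn Aᶜ n ≤ intStart n + cntIn D n := by
    intro n
    set s := Finset.Ico (intStart n) (intStart (n + 1)) with hsdef
    have h1 : (s.filter (fun k => ¬ k ∈ D)).card ≤ cum A (intStart (n + 1)) := by
      rw [cum, cnt]
      apply Finset.card_le_card_of_injOn f
      · intro k hk
        simp only [Finset.mem_coe, Finset.mem_filter, Finset.mem_Ico, hsdef] at hk
        obtain ⟨⟨hk1, hk2⟩, hkD⟩ := hk
        have hfA : f k ∈ A := hbij.mapsTo (Set.mem_univ k)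
        have hflt : f k < intStart (n + 1) := by
          by_contra h2
          push_neg at h2
          exact hkD ⟨n + 1, hk2, h2⟩
        simp only [Finset.mem_coe, Finset.mem_filter, Finset.mem_range]
        exact ⟨hflt, hfA⟩
      · exact hbij.injOn.mono (Set.subset_univ _)
    have h2 := cum_add_cum_compl A (intStart (n + 1))
    have h3 : cntIn Aᶜ n ≤ cum Aᶜ (intStart (n + 1)) := by
      rw [cntIn_def, cum, cnt]
      refine Finset.card_le_card (fun x hx => ?_)
      simp only [Finset.mem_filter, Finset.mem_Ico] at hx
      simp only [Finset.mem_filter, Finset.mem_range]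
      exact ⟨by omega, hx.2⟩
    have h4 := Finset.card_filter_add_card_filter_not (s := s) (p := (· ∈ D))
    have h5 : s.card = n.factorial := card_Ico_intStart n
    have h6 : cntIn D n = (s.filter (· ∈ D)).card := by rw [cntIn_def, hsdef]
    have h7 := intStart_succ n
    omega
  rw [mem_densIdeal_iff]
  intro ε hε
  rw [mem_densIdeal_iff] at hDmem
  filter_upwards [intStart_small (show (0:ℝ) < ε / 2 by linarith),
    hDmem (ε / 2) (by linarith)] with n h1 h2
  have h3 : (cntIn Aᶜ n : ℝ) ≤ (intStart n : ℝ) + (cntIn D n : ℝ) := by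
    exact_mod_cast hmain n
  linarith

lemma antiHomog_densIdeal : AntiHomogIdeal densIdeal := by
  rw [AntiHomogIdeal]
  ext A
  simp only [HF, Set.mem_setOf_eq]
  exact ⟨compl_mem_of_riso, riso_of_compl⟩

/-! ### The Erdős–Ulam part -/

noncomputable def idx (k : ℕ) : ℕ := Nat.findGreatest (fun n => intStart n ≤ k) k

lemma intStart_zero : intStart 0 = 0 := rfl

lemma intStart_one : intStart 1 = 1 := by simp [intStart]

lemma intStart_idx_le (k : ℕ) : intStart (idx k) ≤ k :=
  Nat.findGreatest_spec (P := fun n => intStart n ≤ k) (m := 0) (Nat.zero_le k)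
    (by show intStart 0 ≤ k; simp [intStart_zero])

lemma lt_intStart_idx_succ (k : ℕ) : k < intStart (idx k + 1) := by
  by_contra h
  push_neg at h
  have h1 : idx k + 1 ≤ k := le_trans (self_le_intStart _) h
  exact Nat.findGreatest_is_greatest (Nat.lt_succ_self _) h1 h

lemma idx_eq {n k : ℕ} (h1 : intStart n ≤ k) (h2 : k < intStart (n + 1)) : idx k = n := by
  have a := intStart_idx_le k
  have b := lt_intStart_idx_succ k
  rcases lt_trichotomy (idx k) n with h | h | h
  · have := intStart_strictMono.monotone (show idx k + 1 ≤ n by omega)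
    omega
  · exact h
  · have := intStart_strictMono.monotone (show n + 1 ≤ idx k by omega)
    omega

lemma idx_ge {m n : ℕ} (h : intStart m ≤ n) : m ≤ idx n := by
  by_contra h2
  push_neg at h2
  have := intStart_strictMono.monotone (show idx n + 1 ≤ m by omega)
  have := lt_intStart_idx_succ n
  omega

noncomputable def euH : ℕ → ℝ := fun k => 2 ^ (idx k) / (idx k).factorial

lemma euH_pos (k : ℕ) : 0 < euH k := by
  rw [euH]
  positivity

lemma euH_block {M k : ℕ} (h1 : intStart M ≤ k) (h2 : k < intStart (M + 1)) :
    euH k = 2 ^ M / (M.factorial : ℝ) := by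
  rw [euH, idx_eq h1 h2]

lemma sum_blocks (g : ℕ → ℝ) (a : ℕ) : ∀ b, a ≤ b →
    ∑ k ∈ Finset.Ico (intStart a) (intStart b), g k
      = ∑ M ∈ Finset.Ico a b, ∑ k ∈ Finset.Ico (intStart M) (intStart (M + 1)), g k := by
  intro b hb
  induction b, hb using Nat.le_induction with
  | base => simp
  | succ b hb ih =>
    rw [← Finset.sum_Ico_consecutive g (intStart_strictMono.monotone hb)
        (intStart_strictMono.monotone (Nat.le_succ b)),
      ← Finset.sum_Ico_consecutive _ hb (Nat.le_succ b), ih]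
    simp [Finset.sum_Ico_consecutive]

lemma block_sum_euH (M : ℕ) :
    ∑ k ∈ Finset.Ico (intStart M) (intStart (M + 1)), euH k = 2 ^ M := by
  rw [Finset.sum_congr rfl (fun k hk => by
    simp only [Finset.mem_Ico] at hk
    exact euH_block hk.1 hk.2)]
  rw [Finset.sum_const, card_Ico_intStart, nsmul_eq_mul]
  field_simp

lemma block_sum_ind (A : Set ℕ) (M : ℕ) :
    ∑ k ∈ Finset.Ico (intStart M) (intStart (M + 1)), Set.indicator A euH k
      = (cntIn A M : ℝ) * 2 ^ M / (M.factorial : ℝ) := by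
  have : ∀ k ∈ Finset.Ico (intStart M) (intStart (M + 1)),
      Set.indicator A euH k = if k ∈ A then 2 ^ M / (M.factorial : ℝ) else 0 := by
    intro k hk
    simp only [Finset.mem_Ico] at hk
    rw [Set.indicator_apply, euH_block hk.1 hk.2]
  rw [Finset.sum_congr rfl this, ← Finset.sum_filter, Finset.sum_const, nsmul_eq_mul]
  rw [cntIn_def]
  ring

lemma geomSumIco (N : ℕ) : ∑ M ∈ Finset.Ico 1 (N + 1), (2:ℝ) ^ M = 2 ^ (N + 1) - 2 := by
  induction N with
  | zero => simp
  | succ N ih =>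
    rw [Finset.sum_Ico_succ_top (by omega : 1 ≤ N + 1), ih]
    ring

lemma den_eq (N : ℕ) :
    ∑ k ∈ Finset.Ico 1 (intStart (N + 1)), euH k = 2 ^ (N + 1) - 2 := by
  rw [show Finset.Ico 1 (intStart (N + 1)) = Finset.Ico (intStart 1) (intStart (N + 1)) by
    rw [intStart_one]]
  rw [sum_blocks euH 1 (N + 1) (by omega)]
  rw [Finset.sum_congr rfl (fun M _ => block_sum_euH M)]
  exact geomSumIco N

lemma den_eq' {N : ℕ} (h : 1 ≤ N) :
    ∑ k ∈ Finset.Ico 1 (intStart N), euH k = 2 ^ N - 2 := by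
  obtain ⟨M, rfl⟩ : ∃ M, N = M + 1 := ⟨N - 1, by omega⟩
  exact den_eq M

lemma icc_one_eq_ico (n : ℕ) : Finset.Icc 1 n = Finset.Ico 1 (n + 1) :=
  (Finset.Ico_add_one_right_eq_Icc 1 n).symm

lemma not_summable_euH : ¬ Summable euH := by
  intro hs
  obtain ⟨N, hN⟩ := pow_unbounded_of_one_lt (∑' k, euH k) (by norm_num : (1:ℝ) < 2)
  have h1 : ∑ k ∈ Finset.Ico (intStart N) (intStart (N + 1)), euH k ≤ ∑' k, euH k :=
    Summable.sum_le_tsum _ (fun k _ => (euH_pos k).le) hs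
  rw [block_sum_euH] at h1
  linarith

lemma densIdeal_eq_EU : densIdeal = EU euH := by
  ext A
  constructor
  · intro hA
    rw [mem_densIdeal_iff] at hA
    simp only [EU, Set.mem_setOf_eq]
    rw [Metric.tendsto_atTop]
    intro ε hε
    obtain ⟨K, hK⟩ := eventually_atTop.1 (hA (ε / 8) (by linarith))
    set CK := ∑ k ∈ Finset.Ico 1 (intStart (K + 1)), Set.indicator A euH k with hCK
    have hp : Tendsto (fun N : ℕ => (2:ℝ) ^ N) atTop atTop :=
      tendsto_pow_atTop_atTop_of_one_lt (by norm_num)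
    obtain ⟨N₁, hN₁⟩ := eventually_atTop.1
      ((Filter.Tendsto.const_mul_atTop (show (0:ℝ) < 3/4*ε by linarith) hp).eventually_gt_atTop
        (CK + 2 * ε))
    refine ⟨intStart (max (K + 1) (max 2 N₁)), fun n hn => ?_⟩
    set N := idx n with hNdef
    have hNge : max (K + 1) (max 2 N₁) ≤ N := idx_ge hn
    have hNK : K + 1 ≤ N := le_trans (le_max_left _ _) hNge
    have hN2 : 2 ≤ N := le_trans (le_trans (le_max_left _ _) (le_max_right _ _)) hNge
    have hNN₁ : N₁ ≤ N := le_trans (le_trans (le_max_right _ _) (le_max_right _ _)) hNge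
    have hind_nonneg : ∀ k : ℕ, 0 ≤ Set.indicator A euH k :=
      fun k => Set.indicator_nonneg (fun j _ => (euH_pos j).le) k
    have hNum_nonneg : (0:ℝ) ≤ ∑ k ∈ Finset.Icc 1 n, Set.indicator A euH k :=
      Finset.sum_nonneg (fun k _ => hind_nonneg k)
    have hDen_lb : (2:ℝ) ^ N - 2 ≤ ∑ k ∈ Finset.Icc 1 n, euH k := by
      rw [icc_one_eq_ico, ← den_eq' (show 1 ≤ N by omega)]
      apply Finset.sum_le_sum_of_subset_of_nonneg
      · apply Finset.Ico_subset_Ico le_rfl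
        have h9 := intStart_idx_le n
        rw [← hNdef] at h9
        omega
      · exact fun k _ _ => (euH_pos k).le
    have hDen_pos : (0:ℝ) < ∑ k ∈ Finset.Icc 1 n, euH k := by
      have : (2:ℝ) ^ 2 ≤ 2 ^ N := pow_le_pow_right₀ (by norm_num) hN2
      norm_num at this
      linarith
    have hNum_ub : ∑ k ∈ Finset.Icc 1 n, Set.indicator A euH k
        ≤ CK + ε / 8 * 2 ^ (N + 1) := by
      have step1 : ∑ k ∈ Finset.Icc 1 n, Set.indicator A euH k
          ≤ ∑ k ∈ Finset.Ico 1 (intStart (N + 1)), Set.indicator A euH k := by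
        rw [icc_one_eq_ico]
        apply Finset.sum_le_sum_of_subset_of_nonneg
        · apply Finset.Ico_subset_Ico le_rfl
          have h9 := lt_intStart_idx_succ n
          rw [← hNdef] at h9
          omega
        · exact fun k _ _ => hind_nonneg k
      have step2 : ∑ k ∈ Finset.Ico 1 (intStart (N + 1)), Set.indicator A euH k
          = CK + ∑ M ∈ Finset.Ico (K + 1) (N + 1),
              ∑ k ∈ Finset.Ico (intStart M) (intStart (M + 1)), Set.indicator A euH k := by
        rw [hCK, ← sum_blocks _ (K + 1) (N + 1) (by omega)]
        rw [show Finset.Ico 1 (intStart (K + 1)) = Finset.Ico (intStart 1) (intStart (K + 1)) by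
          rw [intStart_one]]
        rw [Finset.sum_Ico_consecutive]
        · rw [show Finset.Ico (intStart 1) (intStart (N + 1)) = Finset.Ico 1 (intStart (N + 1)) by
            rw [intStart_one]]
        · exact intStart_strictMono.monotone (by omega)
        · exact intStart_strictMono.monotone (by omega)
      have step3 : ∑ M ∈ Finset.Ico (K + 1) (N + 1),
          ∑ k ∈ Finset.Ico (intStart M) (intStart (M + 1)), Set.indicator A euH k
          ≤ ∑ M ∈ Finset.Ico (K + 1) (N + 1), ε / 8 * 2 ^ M := by
        apply Finset.sum_le_sum
        intro M hM
        simp only [Finset.mem_Ico] at hM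
        rw [block_sum_ind]
        have h1 := hK M (by omega)
        rw [div_le_iff₀ (factorial_cast_pos M)]
        have h2 : (0:ℝ) < 2 ^ M := by positivity
        nlinarith
      have step4 : ∑ M ∈ Finset.Ico (K + 1) (N + 1), ε / 8 * (2:ℝ) ^ M
          ≤ ε / 8 * 2 ^ (N + 1) := by
        rw [← Finset.mul_sum]
        have h1 : ∑ M ∈ Finset.Ico (K + 1) (N + 1), (2:ℝ) ^ M
            ≤ ∑ M ∈ Finset.range (N + 1), (2:ℝ) ^ M := by
          apply Finset.sum_le_sum_of_subset_of_nonneg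
          · intro x hx
            simp only [Finset.mem_Ico] at hx
            simp only [Finset.mem_range]
            omega
          · intro k _ _; positivity
        have h2 : ∑ M ∈ Finset.range (N + 1), (2:ℝ) ^ M = (2 ^ (N + 1) - 1) / (2 - 1) :=
          geom_sum_eq (by norm_num) (N + 1)
        have h3 : (0:ℝ) < 2 ^ (N + 1) := by positivity
        rw [h2] at h1
        have : ∑ M ∈ Finset.Ico (K + 1) (N + 1), (2:ℝ) ^ M ≤ 2 ^ (N + 1) := by
          rw [show ((2:ℝ) ^ (N + 1) - 1) / (2 - 1) = 2 ^ (N + 1) - 1 by norm_num] at h1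
          linarith
        nlinarith
      calc ∑ k ∈ Finset.Icc 1 n, Set.indicator A euH k
          ≤ ∑ k ∈ Finset.Ico 1 (intStart (N + 1)), Set.indicator A euH k := step1
        _ = CK + ∑ M ∈ Finset.Ico (K + 1) (N + 1),
              ∑ k ∈ Finset.Ico (intStart M) (intStart (M + 1)), Set.indicator A euH k := step2
        _ ≤ CK + ε / 8 * 2 ^ (N + 1) := by
            have := le_trans step3 step4
            linarith
    rw [Real.dist_eq, sub_zero, abs_of_nonneg (div_nonneg hNum_nonneg hDen_pos.le),
      div_lt_iff₀ hDen_pos]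
    have hgrow := hN₁ N hNN₁
    have hmul : ε * (2 ^ N - 2) ≤ ε * ∑ k ∈ Finset.Icc 1 n, euH k :=
      mul_le_mul_of_nonneg_left hDen_lb hε.le
    have hpow : (2:ℝ) ^ (N + 1) = 2 * 2 ^ N := by ring
    nlinarith
  · intro hA
    simp only [EU, Set.mem_setOf_eq] at hA
    rw [mem_densIdeal_iff]
    intro ε hε
    have hmono : Tendsto (fun N : ℕ => intStart (N + 1) - 1) atTop atTop := by
      apply tendsto_atTop_mono ?_ tendsto_id
      intro N
      simp only [id_eq]
      have := self_le_intStart (N + 1)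
      omega
    have hcomp := hA.comp hmono
    rw [Metric.tendsto_atTop] at hcomp
    obtain ⟨N₀, hN₀⟩ := hcomp (ε / 2) (by linarith)
    refine eventually_atTop.2 ⟨max N₀ 2, fun N hN => ?_⟩
    have hN2 : 2 ≤ N := le_trans (le_max_right _ _) hN
    have hNN₀ : N₀ ≤ N := le_trans (le_max_left _ _) hN
    have hsucc : intStart (N + 1) - 1 + 1 = intStart (N + 1) := by
      have := self_le_intStart (N + 1); omega
    have hIcc : Finset.Icc 1 (intStart (N + 1) - 1) = Finset.Ico 1 (intStart (N + 1)) := by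
      rw [icc_one_eq_ico, hsucc]
    have hdist := hN₀ N hNN₀
    simp only [Function.comp] at hdist
    rw [Real.dist_eq, sub_zero] at hdist
    have hDen : ∑ k ∈ Finset.Icc 1 (intStart (N + 1) - 1), euH k = 2 ^ (N + 1) - 2 := by
      rw [hIcc]; exact den_eq N
    have hpow3 : (8:ℝ) ≤ 2 ^ (N + 1) := by
      calc (8:ℝ) = 2 ^ 3 := by norm_num
        _ ≤ 2 ^ (N + 1) := pow_le_pow_right₀ (by norm_num) (by omega)
    have hden_pos : (0:ℝ) < 2 ^ (N + 1) - 2 := by linarith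
    have hnum_lb : (cntIn A N : ℝ) * 2 ^ N / (N.factorial : ℝ)
        ≤ ∑ k ∈ Finset.Icc 1 (intStart (N + 1) - 1), Set.indicator A euH k := by
      rw [hIcc, ← block_sum_ind]
      apply Finset.sum_le_sum_of_subset_of_nonneg
      · apply Finset.Ico_subset_Ico
        · calc 1 = intStart 1 := intStart_one.symm
            _ ≤ intStart N := intStart_strictMono.monotone (by omega)
        · exact le_rfl
      · exact fun k _ _ => Set.indicator_nonneg (fun j _ => (euH_pos j).le) k
    have hnum_nonneg : (0:ℝ) ≤ ∑ k ∈ Finset.Icc 1 (intStart (N + 1) - 1),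
        Set.indicator A euH k :=
      Finset.sum_nonneg (fun k _ => Set.indicator_nonneg (fun j _ => (euH_pos j).le) k)
    rw [hDen, abs_of_nonneg (div_nonneg hnum_nonneg hden_pos.le)] at hdist
    have hchain : (cntIn A N : ℝ) * 2 ^ N / (N.factorial : ℝ) / (2 ^ (N + 1))
        ≤ (∑ k ∈ Finset.Icc 1 (intStart (N + 1) - 1), Set.indicator A euH k)
          / (2 ^ (N + 1) - 2) := by
      apply div_le_div₀ hnum_nonneg hnum_lb hden_pos (by linarith)
    have heq : (cntIn A N : ℝ) * 2 ^ N / (N.factorial : ℝ) / (2 ^ (N + 1))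
        = (cntIn A N : ℝ) / (2 * N.factorial) := by
      rw [pow_succ]
      field_simp
    rw [heq] at hchain
    have hfinal : (cntIn A N : ℝ) / (2 * N.factorial) < ε / 2 := lt_of_le_of_lt hchain hdist
    rw [div_lt_iff₀ (by positivity : (0:ℝ) < 2 * N.factorial)] at hfinal
    calc (cntIn A N : ℝ) < ε / 2 * (2 * N.factorial) := hfinal
      _ = ε * N.factorial := by ring

/-- `densIdeal` is an anti-homogeneous ideal, and it is an
Erdős–Ulam ideal. -/
theorem stmt_15 :
    IsIdeal densIdeal ∧ AntiHomogIdeal densIdeal ∧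
    ∃ h : ℕ → ℝ, (∀ n, 0 ≤ h n) ∧ ¬ Summable h ∧ densIdeal = EU h :=
  ⟨isIdeal_densIdeal, antiHomog_densIdeal, euH, fun n => (euH_pos n).le,
    not_summable_euH, densIdeal_eq_EU⟩
end

section
/- An ideal I on ω satisfies condition (C4) if and only if I is anti-homogeneous. -/
open Set Filter

/-- `(x_n)` is `I`-convergent to `l`. -/
def IConv (I : Set (Set ℕ)) (x : ℕ → ℝ) (l : ℝ) : Prop :=
  ∀ ε : ℝ, 0 < ε → {n : ℕ | ε ≤ |x n - l|} ∈ I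

/-- Condition (C4). -/
def CondC4 (I : Set (Set ℕ)) : Prop :=
  ∀ (x : ℕ → ℝ) (l : ℝ),
    (∀ f : ℕ → ℕ, BiInvariant I f →
      ∃ g : ℕ → ℕ, BiInvariant I g ∧ IConv I (fun n => x (g (f n))) l) →
    IConv I x l

lemma restr_univ {X : Type*} (I : Set (Set X)) : restr I Set.univ = I := by
  ext C
  constructor
  · rintro ⟨B, hB, rfl⟩; simpa using hB
  · intro h; exact ⟨C, h, by simp⟩

lemma mem_restr_iff {X : Type*} {I : Set (Set X)} (hI : IsIdeal I) {A C : Set X}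
    (hCA : C ⊆ A) : C ∈ restr I A ↔ C ∈ I := by
  constructor
  · rintro ⟨B, hB, rfl⟩; exact hI.1 B (B ∩ A) hB inter_subset_left
  · intro h; exact ⟨C, h, (inter_eq_left.mpr hCA).symm⟩

lemma mem_HF_iff {I : Set (Set ℕ)} (hI : IsIdeal I) {A : Set ℕ} :
    A ∈ HF I ↔ ∃ f : ℕ → ℕ, Set.BijOn f Set.univ A ∧
      ∀ C : Set ℕ, C ⊆ A → (C ∈ I ↔ f ⁻¹' C ∈ I) := by
  constructor
  · rintro ⟨f, hbij, hcond⟩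
    refine ⟨f, hbij, fun C hC => ?_⟩
    have h := hcond C hC
    rwa [mem_restr_iff hI hC, univ_inter, restr_univ] at h
  · rintro ⟨f, hbij, hcond⟩
    refine ⟨f, hbij, fun C hC => ?_⟩
    rw [mem_restr_iff hI hC, univ_inter, restr_univ]
    exact hcond C hC

lemma biInv_range_mem_HF {I : Set (Set ℕ)} (hI : IsIdeal I) {g : ℕ → ℕ}
    (hg : BiInvariant I g) : Set.range g ∈ HF I := by
  rw [mem_HF_iff hI]
  refine ⟨g, ⟨fun n _ => mem_range_self n, fun a _ b _ h => hg.1 h, fun y hy => ?_⟩, ?_⟩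
  · obtain ⟨n, rfl⟩ := hy; exact ⟨n, trivial, rfl⟩
  · intro C hC
    have himg : g '' (g ⁻¹' C) = C := Set.image_preimage_eq_of_subset hC
    constructor
    · intro h; exact (hg.2 (g ⁻¹' C)).mp (by rw [himg]; exact h)
    · intro h; rw [← himg]; exact (hg.2 (g ⁻¹' C)).mpr h

lemma biInv_of_mem_HF {I : Set (Set ℕ)} (hI : IsIdeal I) {A : Set ℕ}
    (hA : A ∈ HF I) : ∃ p : ℕ → ℕ, BiInvariant I p ∧ ∀ n, p n ∈ A := by
  rw [mem_HF_iff hI] at hA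
  obtain ⟨p, hbij, hcond⟩ := hA
  have hinj : Function.Injective p := fun a b h => hbij.2.1 trivial trivial h
  refine ⟨p, ⟨hinj, fun X => ?_⟩, fun n => hbij.1 trivial⟩
  have hsub : p '' X ⊆ A := by rintro y ⟨n, -, rfl⟩; exact hbij.1 trivial
  have h := hcond (p '' X) hsub
  rwa [Set.preimage_image_eq X hinj] at h

lemma exists_bijOn {U V : Set ℕ} (hU : U.Infinite) (hV : V.Infinite) :
    ∃ φ : ℕ → ℕ, Set.BijOn φ U V := by
  haveI := hU.to_subtype
  haveI := hV.to_subtype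
  obtain ⟨e⟩ : Nonempty (↥U ≃ ↥V) := nonempty_equiv_of_countable
  classical
  refine ⟨fun n => if h : n ∈ U then (e ⟨n, h⟩ : ℕ) else n, ?_, ?_, ?_⟩
  · intro n hn; simp only [dif_pos hn]; exact (e ⟨n, hn⟩).2
  · intro a ha b hb hab
    simp only [dif_pos ha, dif_pos hb] at hab
    have h2 := e.injective (Subtype.ext hab)
    exact congrArg Subtype.val h2
  · intro v hv
    refine ⟨(e.symm ⟨v, hv⟩ : ℕ), (e.symm ⟨v, hv⟩).2, ?_⟩
    simp only [dif_pos (e.symm ⟨v, hv⟩).2, Subtype.coe_eta, Equiv.apply_symm_apply]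

lemma glue_spec {S T : Set ℕ} {φ : ℕ → ℕ} (hφ : Set.BijOn φ Sᶜ T)
    (hTS : ∀ t ∈ T, t ∉ S) :
    ∃ h : ℕ → ℕ, Set.BijOn h Set.univ (S ∪ T) ∧
      ∀ C : Set ℕ, h ⁻¹' C = (S ∩ C) ∪ (Sᶜ ∩ φ ⁻¹' C) := by
  classical
  refine ⟨fun n => if n ∈ S then n else φ n, ⟨?_, ?_, ?_⟩, ?_⟩
  · intro n _
    by_cases hn : n ∈ S
    · simp only [if_pos hn]; exact Or.inl hn
    · simp only [if_neg hn]; exact Or.inr (hφ.1 hn)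
  · intro a _ b _ hab
    replace hab : (if a ∈ S then a else φ a) = (if b ∈ S then b else φ b) := hab
    by_cases ha : a ∈ S <;> by_cases hb : b ∈ S
    · rwa [if_pos ha, if_pos hb] at hab
    · rw [if_pos ha, if_neg hb] at hab
      exact absurd (hab ▸ ha) (hTS (φ b) (hφ.1 hb))
    · rw [if_neg ha, if_pos hb] at hab
      rw [← hab] at hb
      exact absurd hb (hTS (φ a) (hφ.1 ha))
    · rw [if_neg ha, if_neg hb] at hab
      exact hφ.2.1 ha hb hab
  · rintro y (hy | hy)
    · exact ⟨y, trivial, if_pos hy⟩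
    · obtain ⟨n, hn, rfl⟩ := hφ.2.2 hy
      exact ⟨n, trivial, if_neg hn⟩
  · intro C
    ext n
    by_cases hn : n ∈ S <;>
      simp [hn]

lemma hf_subset_of_c4 {I : Set (Set ℕ)} (hI : IsIdeal I) (h4 : CondC4 I) :
    ∀ A ∈ HF I, Aᶜ ∈ I := by
  intro A hA
  obtain ⟨p, hp, hpA⟩ := biInv_of_mem_HF hI hA
  classical
  set x : ℕ → ℝ := fun n => if n ∈ A then 0 else 1 with hx
  have hconv : IConv I x 0 := by
    apply h4
    intro f _
    refine ⟨p, hp, ?_⟩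
    intro ε hε
    have hempty : {n : ℕ | ε ≤ |x (p (f n)) - 0|} = ∅ := by
      ext n
      simp only [mem_setOf_eq, mem_empty_iff_false, iff_false, not_le]
      have hxv : x (p (f n)) = 0 := if_pos (hpA (f n))
      rw [hxv]
      simpa using hε
    rw [hempty]
    exact hI.2.2.1 ∅ finite_empty
  have h1 := hconv 1 one_pos
  have heq : {n : ℕ | (1:ℝ) ≤ |x n - 0|} = Aᶜ := by
    ext n
    by_cases hn : n ∈ A <;> simp [hx, hn]
  rwa [heq] at h1

lemma c4_of_hf_subset {I : Set (Set ℕ)} (hI : IsIdeal I)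
    (hH : ∀ A ∈ HF I, Aᶜ ∈ I) : CondC4 I := by
  intro x l hx
  obtain ⟨g, hg, hconv⟩ := hx id ⟨fun a b h => h, fun A => by simp⟩
  intro ε hε
  have h1 : {n | ε ≤ |x (g (id n)) - l|} ∈ I := hconv ε hε
  set S := {n | ε ≤ |x n - l|} with hS
  have hpre : {n | ε ≤ |x (g (id n)) - l|} = g ⁻¹' S := rfl
  rw [hpre] at h1
  have h2 : g '' (g ⁻¹' S) ∈ I := (hg.2 _).mpr h1
  have h3 : (Set.range g)ᶜ ∈ I := hH _ (biInv_range_mem_HF hI hg)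
  have h4' : S ⊆ g '' (g ⁻¹' S) ∪ (Set.range g)ᶜ := by
    intro n hn
    by_cases hr : n ∈ Set.range g
    · obtain ⟨m, rfl⟩ := hr
      exact Or.inl ⟨m, hn, rfl⟩
    · exact Or.inr hr
  exact hI.1 _ S (hI.2.1 _ _ h2 h3) h4'

lemma istar_subset_hf {I : Set (Set ℕ)} (hI : IsIdeal I)
    (hH : ∀ A ∈ HF I, Aᶜ ∈ I) : ∀ A : Set ℕ, Aᶜ ∈ I → A ∈ HF I := by
  intro A hAc
  by_cases hcase : ∃ B, B ∈ I ∧ B ⊆ A ∧ B.Infinite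
  · -- Case 1: A contains an infinite member of I
    obtain ⟨B, hBI, hBA, hBinf⟩ := hcase
    have hBsub : B ⊆ (A \ B)ᶜ := fun b hb => fun hbd => hbd.2 hb
    have hUinf : ((A \ B)ᶜ).Infinite := hBinf.mono hBsub
    obtain ⟨φ, hφ⟩ := exists_bijOn hUinf hBinf
    obtain ⟨h, hbij, hpre⟩ := glue_spec hφ (fun t ht hts => hts.2 ht)
    have hAeq : (A \ B) ∪ B = A := diff_union_of_subset hBA
    rw [mem_HF_iff hI]
    rw [hAeq] at hbij
    refine ⟨h, hbij, ?_⟩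
    intro C hCA
    have hK : B ∪ Aᶜ ∈ I := hI.2.1 _ _ hBI hAc
    have hScomp : (A \ B)ᶜ ⊆ B ∪ Aᶜ := by
      intro n hn
      by_cases hnA : n ∈ A
      · exact Or.inl (by_contra fun hnB => hn ⟨hnA, hnB⟩)
      · exact Or.inr hnA
    constructor
    · intro hC
      rw [hpre]
      refine hI.1 (C ∪ (B ∪ Aᶜ)) _ (hI.2.1 _ _ hC hK) ?_
      rintro n (⟨-, hn⟩ | ⟨hn, -⟩)
      · exact Or.inl hn
      · exact Or.inr (hScomp hn)
    · intro hpC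
      have hfix : (A \ B) ∩ C ∈ I := by
        refine hI.1 _ _ hpC ?_
        intro n hn
        rw [hpre]
        exact Or.inl hn
      refine hI.1 (((A \ B) ∩ C) ∪ (B ∪ Aᶜ)) _ (hI.2.1 _ _ hfix hK) ?_
      intro c hc
      by_cases hcb : c ∈ B
      · exact Or.inr (Or.inl hcb)
      · exact Or.inl ⟨⟨hCA hc, hcb⟩, hc⟩
  · -- Case 2: every subset of A in I is finite, so I = {X | (X ∩ A).Finite}
    push_neg at hcase
    have hchar : ∀ X : Set ℕ, X ∈ I ↔ (X ∩ A).Finite := by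
      intro X
      constructor
      · intro hX
        exact id
          (hcase (X ∩ A) (hI.1 X _ hX inter_subset_left) inter_subset_right)
      · intro hfin
        have h1 : X ∩ A ∈ I := hI.2.2.1 _ hfin
        have h2 : X \ A ∈ I := hI.1 Aᶜ _ hAc (diff_subset_compl X A)
        have := hI.2.1 _ _ h1 h2
        rwa [Set.inter_union_diff] at this
    have hAinf : A.Infinite := by
      intro hAfin
      have : (Set.univ : Set ℕ) ∈ I := by
        rw [hchar]
        exact hAfin.subset inter_subset_right
      exact hI.2.2.2 this
    by_cases hAcfin : Aᶜ.Finite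
    · -- Subcase 2a : I = Fin
      have hIFin : ∀ X : Set ℕ, X ∈ I ↔ X.Finite := by
        intro X
        rw [hchar]
        constructor
        · intro hfin
          have hsub : X ⊆ (X ∩ A) ∪ Aᶜ := by
            intro n hn
            by_cases hnA : n ∈ A
            · exact Or.inl ⟨hn, hnA⟩
            · exact Or.inr hnA
          exact (hfin.union hAcfin).subset hsub
        · intro hfin
          exact hfin.subset inter_subset_left
      obtain ⟨h, hbij⟩ := exists_bijOn Set.infinite_univ hAinf
      rw [mem_HF_iff hI]
      refine ⟨h, hbij, ?_⟩
      intro C hCA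
      rw [hIFin, hIFin]
      have hinj : Function.Injective h := fun a b hab => hbij.2.1 trivial trivial hab
      constructor
      · intro hfin
        exact hfin.preimage (hinj.injOn)
      · intro hfin
        have hCsub : C ⊆ h '' (h ⁻¹' C) := by
          intro c hc
          obtain ⟨n, -, rfl⟩ := hbij.2.2 (hCA hc)
          exact ⟨n, hc, rfl⟩
        exact (hfin.image h).subset hCsub
    · -- Subcase 2b : contradiction with hH
      exfalso
      rw [← Set.not_infinite, not_not] at hAcfin
      haveI := hAinf.to_subtype
      obtain ⟨d⟩ : Nonempty (ℕ ≃ ↥A) := nonempty_equiv_of_countable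
      set D : Set ℕ := Set.range (fun k => (d (2 * k) : ℕ)) with hD
      have huinj : Function.Injective (fun k => (d (2 * k) : ℕ)) := by
        intro a b hab
        have := d.injective (Subtype.coe_injective hab)
        omega
      have hDA : D ⊆ A := by
        rintro _ ⟨k, rfl⟩
        exact (d (2 * k)).2
      have hDinf : D.Infinite := Set.infinite_range_of_injective huinj
      have hADinf : (A \ D).Infinite := by
        apply Set.infinite_of_injective_forall_mem
          (f := fun k => (d (2 * k + 1) : ℕ))
        · intro a b hab
          have := d.injective (Subtype.coe_injective hab)
          omega
        · intro k
          refine ⟨(d (2 * k + 1)).2, ?_⟩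
          rintro ⟨j, hj⟩
          have := d.injective (Subtype.coe_injective hj)
          omega
      obtain ⟨ψ, hψ⟩ := exists_bijOn hAinf hDinf
      have hψ' : Set.BijOn ψ (Aᶜ)ᶜ D := by rwa [compl_compl]
      obtain ⟨h, hbij, hpre⟩ := glue_spec hψ' (fun t ht hts => hts (hDA ht))
      have hCHF : Aᶜ ∪ D ∈ HF I := by
        rw [mem_HF_iff hI]
        refine ⟨h, hbij, ?_⟩
        intro E hE
        rw [hchar, hchar]
        have hEA : E ∩ A ⊆ D := by
          rintro e ⟨heE, heA⟩
          rcases hE heE with hc | hd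
          · exact absurd heA hc
          · exact hd
        have hprA : h ⁻¹' E ∩ A = A ∩ ψ ⁻¹' E := by
          rw [hpre]
          ext n
          simp only [mem_inter_iff, mem_union, mem_compl_iff, mem_preimage, compl_compl]
          constructor
          · rintro ⟨hn | hn, hnA⟩
            · exact absurd hnA hn.1
            · exact ⟨hnA, hn.2⟩
          · rintro ⟨hnA, hnE⟩
            exact ⟨Or.inr ⟨hnA, hnE⟩, hnA⟩
        have himg : ψ '' (A ∩ ψ ⁻¹' E) = E ∩ A := by
          apply Set.Subset.antisymm
          · rintro _ ⟨a, ⟨haA, haE⟩, rfl⟩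
            exact ⟨haE, hDA (hψ.1 haA)⟩
          · intro y hy
            obtain ⟨a, haA, rfl⟩ := hψ.2.2 (hEA hy)
            exact ⟨a, ⟨haA, hy.1⟩, rfl⟩
        rw [hprA]
        constructor
        · intro hfin
          rw [← himg] at hfin
          exact hfin.of_finite_image (hψ.2.1.mono inter_subset_left)
        · intro hfin
          rw [← himg]
          exact hfin.image ψ
      have hcc := hH _ hCHF
      rw [hchar] at hcc
      have : (Aᶜ ∪ D)ᶜ ∩ A = A \ D := by
        rw [compl_union, compl_compl]
        ext n
        constructor
        · rintro ⟨⟨hnA, hnD⟩, -⟩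
          exact ⟨hnA, hnD⟩
        · rintro ⟨hnA, hnD⟩
          exact ⟨⟨hnA, hnD⟩, hnA⟩
      rw [this] at hcc
      exact hADinf hcc

/-- `I` satisfies (C4) iff `I` is anti-homogeneous. -/
theorem stmt_17 (I : Set (Set ℕ)) (hI : IsIdeal I) :
    CondC4 I ↔ AntiHomogIdeal I := by
  constructor
  · intro h4
    have hH := hf_subset_of_c4 hI h4
    unfold AntiHomogIdeal
    ext A
    exact ⟨fun h => hH A h, fun h => istar_subset_hf hI hH A h⟩
  · intro hanti
    apply c4_of_hf_subset hI
    intro A hA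
    unfold AntiHomogIdeal at hanti
    rw [hanti] at hA
    exact hA
end

section
/- An admissible ideal I on ω satisfies condition (C5) if and only if for every A ∉ I with ω∖A ∉ I there exists B ∈ H(I) such that for every C ∈ H(I) with C ⊆ B, the set A ∩ C ∉ I. -/
open Set Filter

/-- A bi-`I`-invariant injection `g : S → S`. -/
def BiInvariantOn (I : Set (Set ℕ)) (S : Set ℕ) (g : ℕ → ℕ) : Prop :=
  Set.MapsTo g S S ∧ Set.InjOn g S ∧ ∀ A : Set ℕ, A ⊆ S → (g '' A ∈ I ↔ A ∈ I)

/-- Condition (C5). -/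
def CondC5 (I : Set (Set ℕ)) : Prop :=
  ∀ (x : ℕ → ℝ) (l : ℝ),
    (∀ f : ℕ → ℕ, BiInvariant I f →
      ∃ g : ℕ → ℕ, BiInvariantOn I (Set.range f) g ∧
        IConv I (fun n => x (g (f n))) l) →
    IConv I x l

lemma restr_mem_iff {I : Set (Set ℕ)} (hI : IsIdeal I) {B C : Set ℕ}
    (hCB : C ⊆ B) : C ∈ restr I B ↔ C ∈ I := by
  constructor
  · rintro ⟨D, hD, rfl⟩
    exact hI.1 D _ hD inter_subset_left
  · intro hC
    exact ⟨C, hC, (inter_eq_left.mpr hCB).symm⟩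

lemma mem_HF_iff_s18 {I : Set (Set ℕ)} (hI : IsIdeal I) {A : Set ℕ} :
    A ∈ HF I ↔ ∃ f : ℕ → ℕ, Function.Injective f ∧ Set.range f = A ∧
      ∀ D : Set ℕ, f '' D ∈ I ↔ D ∈ I := by
  constructor
  · rintro ⟨f, hbij, hcond⟩
    have hinj : Function.Injective f := fun a b h => hbij.injOn trivial trivial h
    have hrange : Set.range f = A := by rw [← image_univ]; exact hbij.image_eq
    refine ⟨f, hinj, hrange, fun D => ?_⟩
    have h1 : f '' D ⊆ A := by rw [← hrange]; exact image_subset_range f D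
    have h2 := hcond (f '' D) h1
    rw [restr_mem_iff hI h1, univ_inter, Set.preimage_image_eq D hinj,
      restr_mem_iff hI (subset_univ D)] at h2
    exact h2
  · rintro ⟨f, hinj, hrange, hinv⟩
    refine ⟨f, ⟨fun x _ => by rw [← hrange]; exact mem_range_self x,
      hinj.injOn, fun a ha => ?_⟩, fun C hCA => ?_⟩
    · rw [image_univ, hrange]; exact ha
    · rw [restr_mem_iff hI hCA, univ_inter, restr_mem_iff hI (subset_univ _)]
      have hC : f '' (f ⁻¹' C) = C := by
        rw [Set.image_preimage_eq_inter_range, hrange, inter_eq_left.mpr hCA]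
      rw [← hinv (f ⁻¹' C), hC]

/-- an admissible ideal satisfies (C5) iff for every
`A ∉ I ∪ I*` there is `B ∈ H(I)` all of whose `H(I)`-subsets meet `A`
`I`-positively. -/
theorem stmt_18 (I : Set (Set ℕ)) (hI : IsIdeal I) (hadm : Admissible I) :
    CondC5 I ↔
      ∀ A : Set ℕ, A ∉ I → Aᶜ ∉ I →
        ∃ B : Set ℕ, B ∈ HF I ∧ ∀ C : Set ℕ, C ∈ HF I → C ⊆ B → A ∩ C ∉ I := by
  constructor
  · -- (C5) → RHS
    intro hC5 A hA hAc
    by_contra hcon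
    push_neg at hcon
    classical
    set x : ℕ → ℝ := fun n => if n ∈ A then (1:ℝ) else 0 with hx
    have hconv : IConv I x 0 := by
      apply hC5 x 0
      rintro f ⟨hfinj, hfinv⟩
      have hBHF : Set.range f ∈ HF I := (mem_HF_iff_s18 hI).mpr ⟨f, hfinj, rfl, hfinv⟩
      obtain ⟨C, hCHF, hCB, hACI⟩ := hcon (Set.range f) hBHF
      obtain ⟨h, hhinj, hhrange, hhinv⟩ := (mem_HF_iff_s18 hI).mp hCHF
      refine ⟨fun m => h (Function.invFun f m), ⟨?_, ?_, ?_⟩, ?_⟩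
      · intro b _
        have : h (Function.invFun f b) ∈ C := by
          rw [← hhrange]; exact mem_range_self _
        exact hCB this
      · intro b1 hb1 b2 hb2 heq
        have h1 : f (Function.invFun f b1) = b1 := Function.invFun_eq hb1
        have h2 : f (Function.invFun f b2) = b2 := Function.invFun_eq hb2
        rw [← h1, ← h2, hhinj heq]
      · intro D hD
        have key2 : Function.invFun f '' D = f ⁻¹' D := by
          ext n
          constructor
          · rintro ⟨d, hd, rfl⟩
            have hfd : f (Function.invFun f d) = d := Function.invFun_eq (hD hd)
            simp only [mem_preimage, hfd]
            exact hd
          · intro hn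
            exact ⟨f n, hn, Function.leftInverse_invFun hfinj n⟩
        have key : (fun m => h (Function.invFun f m)) '' D = h '' (f ⁻¹' D) := by
          rw [show (fun m => h (Function.invFun f m)) = h ∘ Function.invFun f from rfl,
            Set.image_comp, key2]
        rw [key, hhinv]
        have : f '' (f ⁻¹' D) = D := by
          rw [Set.image_preimage_eq_inter_range, inter_eq_left.mpr hD]
        rw [← hfinv (f ⁻¹' D), this]
      · intro ε hε
        have hsub : {n : ℕ | ε ≤ |x (h (Function.invFun f (f n))) - 0|} ⊆
            h ⁻¹' (A ∩ C) := by
          intro n hn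
          simp only [mem_setOf_eq, Function.leftInverse_invFun hfinj n] at hn
          have hhA : h n ∈ A := by
            by_contra hna
            simp only [hx, if_neg hna, sub_zero, abs_zero] at hn
            linarith
          exact ⟨hhA, by rw [← hhrange]; exact mem_range_self n⟩
        have hpre : h ⁻¹' (A ∩ C) ∈ I := by
          rw [← hhinv]
          have : h '' (h ⁻¹' (A ∩ C)) = A ∩ C := by
            rw [Set.image_preimage_eq_inter_range, hhrange,
              inter_eq_left.mpr inter_subset_right]
          rw [this]; exact hACI
        exact hI.1 _ _ hpre hsub
    have hset : {n : ℕ | (1:ℝ) ≤ |x n - 0|} = A := by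
      ext n
      simp only [mem_setOf_eq, hx, sub_zero]
      by_cases hn : n ∈ A <;> simp [hn]
    have hmem := hconv 1 one_pos
    rw [hset] at hmem
    exact hA hmem
  · -- RHS → (C5)
    intro hRHS x l H
    by_contra hnc
    unfold IConv at hnc
    push_neg at hnc
    obtain ⟨ε, hε, hA⟩ := hnc
    set A : Set ℕ := {n : ℕ | ε ≤ |x n - l|} with hAdef
    by_cases hAc : Aᶜ ∈ I
    · obtain ⟨g, ⟨-, -, ginv⟩, hconv⟩ := H id ⟨Function.injective_id, by simp⟩
      have hS : {n : ℕ | ε ≤ |x (g (id n)) - l|} ∈ I := hconv ε hε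
      have hSc : {n : ℕ | ε ≤ |x (g (id n)) - l|}ᶜ ∈ I := by
        rw [← ginv _ (by rw [Set.range_id]; exact subset_univ _)]
        apply hI.1 Aᶜ _ hAc
        rintro _ ⟨n, hn, rfl⟩
        simp only [mem_compl_iff, mem_setOf_eq, id_eq, not_le, hAdef] at hn ⊢
        exact hn
      have : (Set.univ : Set ℕ) ∈ I := by
        have := hI.2.1 _ _ hS hSc
        rwa [union_compl_self] at this
      exact hI.2.2.2 this
    · obtain ⟨B, hBHF, hBprop⟩ := hRHS A hA hAc
      obtain ⟨f, hfinj, hfrange, hfinv⟩ := (mem_HF_iff_s18 hI).mp hBHF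
      obtain ⟨g, ⟨gmaps, ginj, ginv⟩, hconv⟩ := H f ⟨hfinj, hfinv⟩
      set h : ℕ → ℕ := fun n => g (f n) with hhdef
      have hhinj : Function.Injective h := by
        intro a b hab
        exact hfinj (ginj (mem_range_self a) (mem_range_self b) hab)
      have hhinv : ∀ D : Set ℕ, h '' D ∈ I ↔ D ∈ I := by
        intro D
        have : h '' D = g '' (f '' D) := by
          rw [hhdef, show (fun n => g (f n)) = g ∘ f from rfl, Set.image_comp]
        rw [this, ginv _ (image_subset_range f D), hfinv]
      have hCHF : Set.range h ∈ HF I := (mem_HF_iff_s18 hI).mpr ⟨h, hhinj, rfl, hhinv⟩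
      have hCB : Set.range h ⊆ B := by
        rintro _ ⟨n, rfl⟩
        rw [← hfrange]
        exact gmaps (mem_range_self n)
      have hACI : A ∩ Set.range h ∉ I := hBprop _ hCHF hCB
      apply hACI
      have hpre : h ⁻¹' (A ∩ Set.range h) ∈ I := by
        apply hI.1 {n : ℕ | ε ≤ |x (g (f n)) - l|} _ (hconv ε hε)
        intro n hn
        exact hn.1
      rw [← hhinv] at hpre
      rwa [Set.image_preimage_eq_inter_range,
        inter_eq_left.mpr inter_subset_right] at hpre
end

section
/- Let I_d be the ideal of sets of asymptotic density zero. If A ∈ H(I_d) and (a_n)_{n∈ω} is the increasing enumeration of A, then the bijection f : ω → A given by f(n) = a_n witnesses that I_d|A ≅ I_d; that is, for every X ⊆ ω, X ∈ I_d if and only if {a_n : n ∈ X} ∈ I_d. -/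
open Set Filter

/-- The ideal of sets of asymptotic density zero. -/
def densityZero : Set (Set ℕ) :=
  {A | Filter.Tendsto (fun n => ((A ∩ Set.Iio n).ncard : ℝ) / (n : ℝ))
    Filter.atTop (nhds 0)}

private lemma ncard_Iio_nat (n : ℕ) : (Set.Iio n).ncard = n := by
  rw [← Finset.coe_Iio, Set.ncard_coe_finset, Nat.card_Iio]

private lemma finite_inter_Iio (S : Set ℕ) (n : ℕ) : (S ∩ Set.Iio n).Finite :=
  (Set.finite_Iio n).subset inter_subset_right

private lemma div_ratio_le {p q : ℕ} (n : ℕ) (h : p ≤ q) : (p:ℝ)/n ≤ (q:ℝ)/n := by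
  have : (p:ℝ) ≤ (q:ℝ) := by exact_mod_cast h
  gcongr

private lemma dz_iff (S : Set ℕ) :
    S ∈ densityZero ↔ ∀ ε : ℝ, 0 < ε → ∃ N, ∀ n, N ≤ n → ((S ∩ Set.Iio n).ncard : ℝ) / n < ε := by
  simp only [densityZero, Set.mem_setOf_eq]
  rw [Metric.tendsto_atTop]
  constructor
  · intro h ε hε
    obtain ⟨N, hN⟩ := h ε hε
    refine ⟨N, fun n hn => ?_⟩
    have := hN n hn
    rwa [Real.dist_eq, sub_zero, abs_of_nonneg (by positivity)] at this
  · intro h ε hε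
    obtain ⟨N, hN⟩ := h ε hε
    refine ⟨N, fun n hn => ?_⟩
    rw [Real.dist_eq, sub_zero, abs_of_nonneg (by positivity)]
    exact hN n hn

private lemma dz_mono {S T : Set ℕ} (hS : S ∈ densityZero) (h : T ⊆ S) : T ∈ densityZero := by
  rw [dz_iff] at hS ⊢
  intro ε hε
  obtain ⟨N, hN⟩ := hS ε hε
  refine ⟨N, fun n hn => lt_of_le_of_lt (div_ratio_le n ?_) (hN n hn)⟩
  exact Set.ncard_le_ncard (inter_subset_inter_left _ h) (finite_inter_Iio S n)



/-- if `A ∈ H(I_d)` and `a` is the increasing enumeration of `A`,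
then `a` witnesses `I_d|A ≅ I_d`: for all `X`, `X ∈ I_d ↔ a[X] ∈ I_d`. -/
theorem stmt_19 (A : Set ℕ) (hA : A ∈ HF densityZero) (a : ℕ → ℕ)
    (hmono : StrictMono a) (hrange : Set.range a = A) :
    ∀ X : Set ℕ, X ∈ densityZero ↔ a '' X ∈ densityZero := by
  intro X
  have himg_le : ∀ (Y : Set ℕ) (n : ℕ), (a '' Y ∩ Set.Iio n).ncard ≤ (Y ∩ Set.Iio n).ncard := by
    intro Y n
    have hsub : a '' Y ∩ Set.Iio n ⊆ a '' (Y ∩ Set.Iio n) := by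
      rintro x ⟨⟨m, hm, rfl⟩, hlt⟩
      exact ⟨m, ⟨hm, Set.mem_Iio.2 (lt_of_le_of_lt hmono.le_apply (Set.mem_Iio.1 hlt))⟩, rfl⟩
    calc (a '' Y ∩ Set.Iio n).ncard ≤ (a '' (Y ∩ Set.Iio n)).ncard :=
          Set.ncard_le_ncard hsub ((finite_inter_Iio Y n).image a)
      _ = (Y ∩ Set.Iio n).ncard := Set.ncard_image_of_injective _ hmono.injective
  constructor
  · intro hX
    rw [dz_iff] at hX ⊢
    intro ε hε
    obtain ⟨N, hN⟩ := hX ε hε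
    exact ⟨N, fun n hn => lt_of_le_of_lt (div_ratio_le n (himg_le X n)) (hN n hn)⟩
  · intro haX
    by_contra hX
    obtain ⟨f, hbij, hres⟩ := hA
    have hKey : ∀ C : Set ℕ, C ⊆ A → (C ∈ densityZero ↔ f ⁻¹' C ∈ densityZero) := by
      intro C hC
      have h1 : C ∈ restr densityZero A ↔ C ∈ densityZero := by
        constructor
        · rintro ⟨B, hB, rfl⟩; exact dz_mono hB inter_subset_left
        · intro hC'; exact ⟨C, hC', (inter_eq_left.2 hC).symm⟩
      have h2 : Set.univ ∩ f ⁻¹' C ∈ restr densityZero Set.univ ↔ f ⁻¹' C ∈ densityZero := by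
        rw [univ_inter]
        constructor
        · rintro ⟨B, hB, hE⟩; rw [hE]; exact dz_mono hB inter_subset_left
        · intro h; exact ⟨_, h, (inter_univ _).symm⟩
      rw [← h1, ← h2]; exact hres C hC
    rw [dz_iff] at hX
    push_neg at hX
    obtain ⟨δ, hδ, hfreq⟩ := hX
    -- at `X`-dense scales, `a` grows superlinearly
    have hscale : ∀ c B : ℕ, ∃ N, B ≤ N ∧ 1 ≤ N ∧ c * N ≤ a N := by
      intro c B
      have hε' : (0:ℝ) < δ / (2 * ((c:ℝ) + 1)) := by positivity
      obtain ⟨n₀, hn₀⟩ := (dz_iff _).1 haX _ hε'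
      obtain ⟨N, hN1, hN2⟩ := hfreq (max (max B n₀) 1)
      have h1N : 1 ≤ N := le_trans (le_max_right _ _) hN1
      have hBN : B ≤ N := le_trans (le_trans (le_max_left _ _) (le_max_left _ _)) hN1
      have hn₀N : n₀ ≤ N := le_trans (le_trans (le_max_right _ _) (le_max_left _ _)) hN1
      have hNa : N ≤ a N := hmono.le_apply
      have hcard : (X ∩ Set.Iio N).ncard ≤ (a '' X ∩ Set.Iio (a N + 1)).ncard := by
        have hsub : a '' (X ∩ Set.Iio N) ⊆ a '' X ∩ Set.Iio (a N + 1) := by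
          rintro x ⟨p, ⟨hpX, hpN⟩, rfl⟩
          refine ⟨⟨p, hpX, rfl⟩, Set.mem_Iio.2 ?_⟩
          have : a p < a N := hmono (Set.mem_Iio.1 hpN)
          omega
        calc (X ∩ Set.Iio N).ncard
            = (a '' (X ∩ Set.Iio N)).ncard := (Set.ncard_image_of_injective _ hmono.injective).symm
          _ ≤ _ := Set.ncard_le_ncard hsub (finite_inter_Iio (a '' X) (a N + 1))
      have hNpos : (0:ℝ) < (N:ℝ) := by exact_mod_cast h1N
      have r1 : δ * N ≤ ((X ∩ Set.Iio N).ncard : ℝ) := by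
        rw [le_div_iff₀ hNpos] at hN2
        exact hN2
      have r2 : ((a '' X ∩ Set.Iio (a N + 1)).ncard : ℝ)
          < (δ / (2 * ((c:ℝ) + 1))) * ((a N + 1 : ℕ):ℝ) := by
        have := hn₀ (a N + 1) (by omega)
        rwa [div_lt_iff₀ (by positivity)] at this
      have h1a : (1:ℝ) ≤ (a N : ℝ) := by exact_mod_cast le_trans h1N hNa
      have r3 : ((a N + 1 : ℕ):ℝ) ≤ 2 * (a N : ℝ) := by push_cast; linarith
      have hcastcard : ((X ∩ Set.Iio N).ncard : ℝ) ≤ ((a '' X ∩ Set.Iio (a N + 1)).ncard : ℝ) := by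
        exact_mod_cast hcard
      have r4 : δ * N < (δ / (2 * ((c:ℝ) + 1))) * (2 * (a N:ℝ)) := by
        have := mul_le_mul_of_nonneg_left r3 hε'.le
        linarith
      have r5 : ((c:ℝ)+1) * N < (a N : ℝ) := by
        have h2 : (0:ℝ) < 2*((c:ℝ)+1) := by positivity
        have hδeq : (δ / (2 * ((c:ℝ) + 1))) * (2*((c:ℝ)+1)) = δ := div_mul_cancel₀ _ (ne_of_gt h2)
        rw [← hδeq] at r4
        have h3 : (2*(δ / (2 * ((c:ℝ) + 1)))) * (((c:ℝ)+1) * N)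
            < (2*(δ / (2 * ((c:ℝ) + 1)))) * (a N) := by nlinarith [r4]
        exact lt_of_mul_lt_mul_left h3 (by positivity)
      have r6 : c * N ≤ a N := by
        have : ((c * N : ℕ) : ℝ) ≤ ((a N : ℕ) : ℝ) := by push_cast; nlinarith [r5, hNpos]
        exact_mod_cast this
      exact ⟨N, hBN, h1N, r6⟩
    -- build the sparse scale sequence M
    choose Nf hNf1 hNf2 hNf3 using hscale
    let M : ℕ → ℕ := fun k => Nat.rec (Nf 0 1) (fun k ih => Nf (4*(k+1)) (2*ih)) k
    have hM0 : M 0 = Nf 0 1 := rfl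
    have hMS : ∀ k, M (k+1) = Nf (4*(k+1)) (2*(M k)) := fun k => rfl
    have hM1 : ∀ k, 1 ≤ M k := by
      intro k
      cases k with
      | zero => rw [hM0]; exact hNf2 0 1
      | succ k => rw [hMS]; exact hNf2 _ _
    have hMd : ∀ k, 2 * M k ≤ M (k+1) := fun k => by rw [hMS]; exact hNf1 _ _
    have hMa : ∀ k, 4*(k+1)*(M (k+1)) ≤ a (M (k+1)) := fun k => by rw [hMS]; exact hNf3 _ _
    have hMs : StrictMono M := strictMono_nat_of_lt_succ (fun k => by
      have := hMd k; have := hM1 k; omega)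
    clear hM0 hMS
    clear_value M
    have hAe : ∀ N, A ∩ Set.Iio (a N) = a '' Set.Iio N := by
      intro N; ext x
      constructor
      · rintro ⟨hxA, hx⟩
        rw [← hrange] at hxA
        obtain ⟨p, rfl⟩ := hxA
        exact ⟨p, Set.mem_Iio.2 (hmono.lt_iff_lt.1 (Set.mem_Iio.1 hx)), rfl⟩
      · rintro ⟨p, hp, rfl⟩
        exact ⟨hrange ▸ Set.mem_range_self p, Set.mem_Iio.2 (hmono (Set.mem_Iio.1 hp))⟩
    -- the bad set C
    set C : Set ℕ := ⋃ k, (f '' Set.Iio (2 * M (k+1)) ∩ Set.Ici (a (M (k+1)))) with hCdef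
    have hCA : C ⊆ A := by
      rintro x hx
      simp only [hCdef, mem_iUnion] at hx
      obtain ⟨k, ⟨⟨p, _, rfl⟩, _⟩⟩ := hx
      exact hbij.mapsTo (mem_univ p)
    have hcount : ∀ k n, n ≤ a (M (k+1)) → (C ∩ Set.Iio n).ncard ≤ 2 * M k := by
      intro k n hn
      have hsub : C ∩ Set.Iio n ⊆ f '' Set.Iio (2 * M k) := by
        rintro x ⟨hxC, hxn⟩
        simp only [hCdef, mem_iUnion] at hxC
        obtain ⟨j, ⟨⟨p, hp, rfl⟩, hge⟩⟩ := hxC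
        by_cases hjk : j + 1 ≤ k
        · refine ⟨p, Set.mem_Iio.2 ?_, rfl⟩
          have h5 : M (j+1) ≤ M k := hMs.monotone hjk
          have h6 : p < 2 * M (j+1) := Set.mem_Iio.1 hp
          omega
        · exfalso
          have h2 : a (M (k+1)) ≤ a (M (j+1)) := hmono.monotone (hMs.monotone (by omega))
          have h3 : a (M (j+1)) ≤ f p := hge
          have h4 : f p < n := Set.mem_Iio.1 hxn
          omega
      calc (C ∩ Set.Iio n).ncard ≤ (f '' Set.Iio (2 * M k)).ncard :=
            Set.ncard_le_ncard hsub ((Set.finite_Iio _).image f)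
        _ ≤ (Set.Iio (2 * M k)).ncard := Set.ncard_image_le (Set.finite_Iio _)
        _ = 2 * M k := _root_.ncard_Iio_nat _
    -- C has density zero
    have hCdz : C ∈ densityZero := by
      rw [dz_iff]
      intro ε hε
      obtain ⟨k₀', hk₀'⟩ := exists_nat_gt (1/ε)
      have hk₀'pos : 0 < k₀' := by
        have : (0:ℝ) < (k₀':ℝ) := lt_trans (by positivity) hk₀'
        exact_mod_cast this
      refine ⟨a (M (max k₀' 1)) + 1, fun n hn => ?_⟩
      have hex : ∃ k, n ≤ a (M (k+1)) := by
        refine ⟨n, ?_⟩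
        have h1 : n ≤ M (n+1) := le_trans (by omega) hMs.le_apply
        exact le_trans h1 hmono.le_apply
      have hk_spec : n ≤ a (M (Nat.find hex + 1)) := Nat.find_spec hex
      set k := Nat.find hex with hkdef
      have hkk₀ : max k₀' 1 ≤ k := by
        by_contra hcon
        push_neg at hcon
        have h2 : a (M (k+1)) ≤ a (M (max k₀' 1)) := hmono.monotone (hMs.monotone hcon)
        omega
      have hk1 : 1 ≤ k := le_trans (le_max_right _ _) hkk₀
      have hnk : a (M k) < n := by
        have hmin := Nat.find_min hex (show k - 1 < k by omega)
        push_neg at hmin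
        have he : (k - 1) + 1 = k := by omega
        rwa [he] at hmin
      have hcnt := hcount k n hk_spec
      have h4k : 4 * k * M k ≤ a (M k) := by
        have h7 := hMa (k-1)
        have he : (k-1)+1 = k := by omega
        rwa [he] at h7
      have hMk1 : 1 ≤ M k := hM1 k
      have hnpos : 0 < n := by
        have h8 : M k ≤ a (M k) := hmono.le_apply
        omega
      have hr1 : ((C ∩ Set.Iio n).ncard : ℝ) / n ≤ ((2 * M k : ℕ) : ℝ) / n := div_ratio_le n hcnt
      have hr2 : ((2 * M k : ℕ) : ℝ) / n < ε := by
        have hnge : 4 * k₀' * M k ≤ n :=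
          calc 4*k₀'*M k ≤ 4*k*M k := Nat.mul_le_mul_right _ (by
                have : k₀' ≤ k := le_trans (le_max_left _ _) hkk₀
                omega)
            _ ≤ a (M k) := h4k
            _ ≤ n := le_of_lt hnk
        rw [div_lt_iff₀ (by exact_mod_cast hnpos)]
        have hεk : 1 < ε * k₀' := by
          rw [div_lt_iff₀ hε] at hk₀'
          linarith
        have hc1 : ((4*k₀'*M k:ℕ):ℝ) ≤ (n:ℝ) := by exact_mod_cast hnge
        push_cast at hc1 ⊢
        have hMk1r : (1:ℝ) ≤ (M k : ℝ) := by exact_mod_cast hMk1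
        nlinarith [mul_le_mul_of_nonneg_left hc1 hε.le, hεk, hMk1r, hε.le]
      exact lt_of_le_of_lt hr1 hr2
    -- but f ⁻¹' C does not
    have hpre : f ⁻¹' C ∉ densityZero := by
      intro hcon
      rw [dz_iff] at hcon
      obtain ⟨N₀, hN₀⟩ := hcon (1/4) (by norm_num)
      have hm1 : 1 ≤ M (N₀+1) := hM1 _
      have hnN₀ : N₀ ≤ 2 * M (N₀+1) := by
        have h1 : N₀ + 1 ≤ M (N₀+1) := hMs.le_apply
        omega
      have hineq := hN₀ (2*M (N₀+1)) hnN₀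
      have hSsub : Set.Iio (2*M (N₀+1)) ∩ f ⁻¹' (Set.Ici (a (M (N₀+1))))
          ⊆ f ⁻¹' C ∩ Set.Iio (2*M (N₀+1)) := by
        rintro x ⟨hx1, hx2⟩
        refine ⟨?_, hx1⟩
        simp only [hCdef, Set.mem_preimage, mem_iUnion]
        exact ⟨N₀, ⟨x, hx1, rfl⟩, hx2⟩
      have hTcard : (Set.Iio (2*M (N₀+1)) ∩ f ⁻¹' (Set.Iio (a (M (N₀+1))))).ncard ≤ M (N₀+1) := by
        have himg : f '' (Set.Iio (2*M (N₀+1)) ∩ f ⁻¹' (Set.Iio (a (M (N₀+1)))))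
            ⊆ A ∩ Set.Iio (a (M (N₀+1))) := by
          rintro y ⟨x, ⟨_, hx2⟩, rfl⟩
          exact ⟨hbij.mapsTo (mem_univ x), hx2⟩
        have h1 : (Set.Iio (2*M (N₀+1)) ∩ f ⁻¹' (Set.Iio (a (M (N₀+1))))).ncard
            = (f '' (Set.Iio (2*M (N₀+1)) ∩ f ⁻¹' (Set.Iio (a (M (N₀+1)))))).ncard :=
          (Set.ncard_image_of_injOn (hbij.injOn.mono (subset_univ _))).symm
        rw [h1]
        calc _ ≤ (A ∩ Set.Iio (a (M (N₀+1)))).ncard :=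
              Set.ncard_le_ncard himg (finite_inter_Iio A _)
          _ = (a '' Set.Iio (M (N₀+1))).ncard := by rw [hAe]
          _ = M (N₀+1) := by rw [Set.ncard_image_of_injective _ hmono.injective, _root_.ncard_Iio_nat]
      have hunion : (Set.Iio (2*M (N₀+1)) ∩ f ⁻¹' (Set.Ici (a (M (N₀+1)))))
          ∪ (Set.Iio (2*M (N₀+1)) ∩ f ⁻¹' (Set.Iio (a (M (N₀+1))))) = Set.Iio (2*M (N₀+1)) := by
        ext x
        constructor
        · rintro (⟨h,_⟩|⟨h,_⟩) <;> exact h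
        · intro h
          rcases le_or_gt (a (M (N₀+1))) (f x) with h2 | h2
          · exact Or.inl ⟨h, h2⟩
          · exact Or.inr ⟨h, h2⟩
      have hScard : M (N₀+1) ≤ (Set.Iio (2*M (N₀+1)) ∩ f ⁻¹' (Set.Ici (a (M (N₀+1))))).ncard := by
        have h2m : (Set.Iio (2*M (N₀+1))).ncard = 2*M (N₀+1) := _root_.ncard_Iio_nat _
        have hle := Set.ncard_union_le (Set.Iio (2*M (N₀+1)) ∩ f ⁻¹' (Set.Ici (a (M (N₀+1)))))
          (Set.Iio (2*M (N₀+1)) ∩ f ⁻¹' (Set.Iio (a (M (N₀+1)))))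
        rw [hunion, h2m] at hle
        omega
      have hCcard : M (N₀+1) ≤ (f ⁻¹' C ∩ Set.Iio (2*M (N₀+1))).ncard :=
        le_trans hScard (Set.ncard_le_ncard hSsub (finite_inter_Iio _ _))
      have hhalf : (1:ℝ)/2 ≤ ((f ⁻¹' C ∩ Set.Iio (2*M (N₀+1))).ncard : ℝ) / ((2*M (N₀+1) : ℕ):ℝ) := by
        rw [le_div_iff₀ (by exact_mod_cast (by omega : 0 < 2*M (N₀+1)))]
        have hc : ((M (N₀+1):ℕ):ℝ) ≤ ((f ⁻¹' C ∩ Set.Iio (2*M (N₀+1))).ncard : ℝ) := by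
          exact_mod_cast hCcard
        push_cast
        linarith
      linarith [hineq, hhalf]
    exact hpre ((hKey C hCA).1 hCdz)
end
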